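/- Let μ be a capacity on [m], β ∈ [0,1], and let f_i: X_i → [0,1] be feature transformations with u_i = f_i(x_i). Then the Sugeno classifier h(x) = I( S_μ(f_1(x_1),...,f_m(x_m)) ≥ β ) coincides with the disjunctive normal form classifier h'(x) = ⋁_{A boundary set} ⋀_{i ∈ A} I( f_i(x_i) ≥ β ), where the disjunction ranges over all boundary sets A of [m] for μ and β. That is, for every x, S_μ(f_1(x_1),...,f_m(x_m)) ≥ β if and only if there exists a boundary set A with f_i(x_i) ≥ β for all i ∈ A. -/

import Mathlib

/-- The minimum of `u` over a finite subset `A` (with the convention that the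
minimum over the empty set is `1`, the top of the unit interval). -/
noncomputable def setMin {m : ℕ} (u : Fin m → ℝ) (A : Finset (Fin m)) : ℝ :=
  if h : A.Nonempty then A.inf' h u else 1

/-- The (discrete) Sugeno integral of `u : [m] → ℝ` with respect to the set
function `μ`, in disjunctive normal form:
`S_μ(u) = ⋁_{A ⊆ [m]} ((⋀_{j ∈ A} u j) ∧ μ A)`. -/
noncomputable def sugeno {m : ℕ} (μ : Finset (Fin m) → ℝ) (u : Fin m → ℝ) : ℝ :=
  (Finset.univ : Finset (Finset (Fin m))).sup' Finset.univ_nonempty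
    (fun A => min (setMin u A) (μ A))

/-- A capacity on `[m]`: a monotone set function with `μ ∅ = 0` and `μ [m] = 1`. -/
def IsCapacity {m : ℕ} (μ : Finset (Fin m) → ℝ) : Prop :=
  μ ∅ = 0 ∧ μ Finset.univ = 1 ∧
    ∀ A B : Finset (Fin m), A ⊆ B → μ A ≤ μ B

/-- A boundary set for the capacity `μ` and threshold `β`: a minimal subset of
`[m]` whose measure reaches the threshold. -/
def IsBoundarySet {m : ℕ} (μ : Finset (Fin m) → ℝ) (β : ℝ)
    (A : Finset (Fin m)) : Prop :=
  β ≤ μ A ∧ ∀ A' ⊂ A, μ A' < β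

/-- The Sugeno classifier coincides with the disjunctive-normal-form classifier
over boundary sets: `S_μ(f₁(x₁),…,f_m(x_m)) ≥ β` iff there exists a boundary
set `A` with `f_i(x_i) ≥ β` for all `i ∈ A`. -/
theorem sugeno_classifier_eq_dnf (m : ℕ) (μ : Finset (Fin m) → ℝ)
    (hμ : IsCapacity μ) (β : ℝ) (hβ0 : 0 ≤ β) (hβ1 : β ≤ 1)
    (X : Fin m → Type) (f : ∀ i, X i → ℝ)
    (hf : ∀ i x, 0 ≤ f i x ∧ f i x ≤ 1) (x : ∀ i, X i) :
    (β ≤ sugeno μ (fun i => f i (x i))) ↔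
      ∃ A : Finset (Fin m), IsBoundarySet μ β A ∧ ∀ i ∈ A, β ≤ f i (x i) := by
  set u : Fin m → ℝ := fun i => f i (x i) with hu
  constructor
  · intro h
    obtain ⟨A, -, hA⟩ := Finset.exists_mem_eq_sup' (Finset.univ_nonempty)
      (fun A : Finset (Fin m) => min (setMin u A) (μ A))
    rw [sugeno] at h; rw [hA] at h
    have hμA : β ≤ μ A := le_trans h (min_le_right _ _)
    have hmin : β ≤ setMin u A := le_trans h (min_le_left _ _)
    have hall : ∀ i ∈ A, β ≤ u i := by
      intro i hi
      have hne : A.Nonempty := ⟨i, hi⟩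
      rw [setMin, dif_pos hne] at hmin
      exact le_trans hmin (Finset.inf'_le _ hi)
    -- find minimal subset of A with μ ≥ β
    set s : Finset (Finset (Fin m)) := (A.powerset).filter (fun B => β ≤ μ B) with hs
    have hAs : A ∈ s := by
      simp [hs, Finset.mem_filter, Finset.mem_powerset, hμA]
    obtain ⟨B, hBs, hBmin⟩ := Finset.exists_minimal ⟨A, hAs⟩
    rw [hs, Finset.mem_filter, Finset.mem_powerset] at hBs
    refine ⟨B, ⟨hBs.2, ?_⟩, fun i hi => hall i (hBs.1 hi)⟩
    intro A' hA'
    by_contra hc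
    push_neg at hc
    exact not_subset_of_ssubset hA' (hBmin (y := A') (by simp [hs, Finset.mem_filter, Finset.mem_powerset,
      hc, hA'.subset.trans hBs.1]) hA'.subset)
  · rintro ⟨A, ⟨hAβ, -⟩, hAf⟩
    have : β ≤ min (setMin u A) (μ A) := by
      refine le_min ?_ hAβ
      rw [setMin]
      split
      · next hne => exact Finset.le_inf' hne u hAf
      · exact hβ1
    rw [sugeno]
    exact le_trans this (Finset.le_sup' (fun B => min (setMin u B) (μ B)) (Finset.mem_univ A))
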